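/- Let f_c be an exponential map, and suppose a dynamic ray g_s lands at c, the address s satisfies: the Euclidean length of the arcs g_{σ^n s}((0,t]) tends to 0 uniformly in n as t → 0, and c is non-recurrent (there is ε > 0 with dist(c, P(f_c)) > ε where P(f_c) is the closure of the forward orbit of c). Assume additionally the transversal continuity property: if σ^{k_j} s → s then g_{σ^{k_j} s}(t_0) → g_s(t_0) for fixed t_0 > 0. Then the address s is non-recurrent, i.e. s ∉ closure of {σ^n s : n ≥ 1}. -/

import Mathlib

/-- The exponential map `f_c(z) = e^z + c`. -/
noncomputable def expMap (c : ℂ) : ℂ → ℂ := fun z => Complex.exp z + c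

/-- The postsingular set: closure of the forward orbit `{f_c^n(c) : n ≥ 1}`. -/
noncomputable def postsingular (c : ℂ) : Set ℂ :=
  closure (Set.range fun n : ℕ => (expMap c)^[n + 1] c)

/-- The distance `d(s,s') = ∑_{i : s_i ≠ s'_i} 2^{-i}` on addresses. -/
noncomputable def seqDist (s s' : ℕ → ℤ) : ℝ :=
  ∑' i : ℕ, if s i ≠ s' i then ((1 : ℝ) / 2) ^ i else 0

/-- The left shift on addresses. -/
def shift (s : ℕ → ℤ) : ℕ → ℤ := fun i => s (i + 1)

lemma seqDist_nonneg (s s' : ℕ → ℤ) : 0 ≤ seqDist s s' :=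
  tsum_nonneg fun i => by split <;> positivity

/-- If the ray `g_s` lands at `c` (and `g_{σ^k s}` lands at `f_c^k(c)`), the lengths of
the arcs `g_{σ^n s}((0,t])` tend to `0` uniformly in `n` as `t → 0`, `c` is
non-recurrent, and transversal continuity holds, then the address `s` is
non-recurrent: it stays a definite distance away from all its shifts. -/
theorem stmt16 (c : ℂ) (g : (ℕ → ℤ) → ℝ → ℂ) (s : ℕ → ℤ)
    (hland : ∀ k : ℕ, Filter.Tendsto (g (shift^[k] s))
      (nhdsWithin 0 (Set.Ioi 0)) (nhds ((expMap c)^[k] c)))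
    (hlen : ∀ ε > (0 : ℝ), ∃ tε > (0 : ℝ), ∀ (n : ℕ) (t : ℝ), 0 < t → t < tε →
      eVariationOn (g (shift^[n] s)) (Set.Ioc 0 t) < ENNReal.ofReal ε)
    (hnr : ∃ ε > (0 : ℝ), ∀ z ∈ postsingular c, ε < dist c z)
    (htrans : ∀ (k : ℕ → ℕ) (t0 : ℝ), 0 < t0 →
      Filter.Tendsto (fun j => seqDist s (shift^[k j] s)) Filter.atTop (nhds 0) →
      Filter.Tendsto (fun j => g (shift^[k j] s) t0) Filter.atTop (nhds (g s t0))) :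
    ∃ ε > (0 : ℝ), ∀ n : ℕ, 1 ≤ n → ε ≤ seqDist s (shift^[n] s) := by
  obtain ⟨ε, hε, hdist⟩ := hnr
  obtain ⟨tε, htε, hvar⟩ := hlen (ε / 4) (by positivity)
  have h0 : Filter.Tendsto (g s) (nhdsWithin 0 (Set.Ioi 0)) (nhds c) := by
    simpa using hland 0
  have hev : ∀ᶠ t in nhdsWithin (0 : ℝ) (Set.Ioi 0),
      dist (g s t) c < ε / 4 ∧ t ∈ Set.Ioo 0 tε := by
    filter_upwards [Metric.tendsto_nhds.mp h0 (ε / 4) (by positivity),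
      Ioo_mem_nhdsGT_of_mem ⟨le_refl (0 : ℝ), htε⟩] with t h1 h2
    exact ⟨h1, h2⟩
  obtain ⟨t0, h1, h2⟩ := hev.exists
  have ht0 : 0 < t0 := h2.1
  -- key estimate: landing points are within ε/4 of the ray point at t0
  have hkey : ∀ n : ℕ, dist ((expMap c)^[n] c) (g (shift^[n] s) t0) < ε / 4 := by
    intro n
    have hmem : Set.Ioc 0 t0 ∈ nhdsWithin (0 : ℝ) (Set.Ioi 0) :=
      Ioc_mem_nhdsGT_of_mem ⟨le_refl (0 : ℝ), ht0⟩
    have hle : ∀ᶠ t in nhdsWithin (0 : ℝ) (Set.Ioi 0),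
        edist (g (shift^[n] s) t) (g (shift^[n] s) t0)
          ≤ eVariationOn (g (shift^[n] s)) (Set.Ioc 0 t0) := by
      filter_upwards [hmem] with t ht
      exact eVariationOn.edist_le _ ht ⟨ht0, le_refl t0⟩
    have htend : Filter.Tendsto (fun t => edist (g (shift^[n] s) t) (g (shift^[n] s) t0))
        (nhdsWithin 0 (Set.Ioi 0))
        (nhds (edist ((expMap c)^[n] c) (g (shift^[n] s) t0))) :=
      (hland n).edist tendsto_const_nhds
    have hle' := le_of_tendsto htend hle
    have hlt := lt_of_le_of_lt hle' (hvar n t0 ht0 h2.2)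
    exact edist_lt_ofReal.mp hlt
  by_contra hcon
  push_neg at hcon
  choose k hk1 hk2 using fun j : ℕ => hcon (1 / ((j : ℝ) + 1)) (by positivity)
  have hlim : Filter.Tendsto (fun j => seqDist s (shift^[k j] s)) Filter.atTop (nhds 0) :=
    squeeze_zero (fun j => seqDist_nonneg _ _) (fun j => (hk2 j).le)
      tendsto_one_div_add_atTop_nhds_zero_nat
  have hT := htrans k t0 ht0 hlim
  obtain ⟨j, hj⟩ := (Metric.tendsto_nhds.mp hT (ε / 4) (by positivity)).exists
  set n := k j with hn
  have hmemP : (expMap c)^[n] c ∈ postsingular c :=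
    subset_closure ⟨n - 1, by show (expMap c)^[n - 1 + 1] c = _; rw [Nat.sub_add_cancel (hk1 j : 1 ≤ n)]⟩
  have h3 := hdist _ hmemP
  have tri : dist c ((expMap c)^[n] c)
      ≤ dist c (g s t0) + dist (g s t0) (g (shift^[n] s) t0)
        + dist (g (shift^[n] s) t0) ((expMap c)^[n] c) := dist_triangle4 _ _ _ _
  rw [dist_comm c (g s t0)] at tri
  rw [dist_comm (g (shift^[n] s) t0) ((expMap c)^[n] c)] at tri
  rw [dist_comm (g s t0) (g (shift^[n] s) t0)] at tri
  have hk := hkey n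
  linarith [hj]
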